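/- Let w be a positive integer and p a real polynomial such that |p(1/k)| ≤ 1 for all integers k ∈ {1, …, 2w}, p(1/w) ≤ 1/3, and p(1/(2w)) ≥ 2/3. Then deg(p) = Ω(w^{1/3}); precisely, there is a universal constant c > 0 such that deg(p) ≥ c · w^{1/3}. -/

import Mathlib

set_option maxHeartbeats 1000000

open Finset Polynomial

namespace FedjaAux




/-- ∏_{t<m} (a+1+t) = (a+m)!/a! -/
lemma prod_shift (a : ℕ) : ∀ m : ℕ, ∏ t ∈ range m, ((a : ℝ) + 1 + t)
    = (Nat.factorial (a+m)) / (Nat.factorial a)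
  | 0 => by
    have : ((Nat.factorial a):ℝ) ≠ 0 := by positivity
    simp [div_self this]
  | (m+1) => by
    rw [prod_range_succ, prod_shift a m]
    have h : ((Nat.factorial (a+m)) : ℝ) ≠ 0 := by positivity
    have h2 : ((Nat.factorial (a + (m+1))) : ℝ)
        = ((Nat.factorial (a+m)) : ℝ) * ((a:ℝ) + 1 + m) := by
      have h3 : a + (m+1) = (a+m) + 1 := by ring
      rw [h3, Nat.factorial_succ]
      push_cast; ring
    rw [h2]
    field_simp

/-- ∏_{t<m} (m - t) = m! -/
lemma prod_reflect (m : ℕ) : ∏ t ∈ range m, ((m : ℝ) - t) = Nat.factorial m := by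
  have h := Finset.prod_range_reflect (fun t => ((t : ℝ) + 1)) m
  have h2 : ∏ t ∈ range m, ((m : ℝ) - t) = ∏ j ∈ range m, (((m - 1 - j : ℕ) : ℝ) + 1) := by
    refine Finset.prod_congr rfl fun j hj => ?_
    have hj' : j < m := mem_range.mp hj
    have e1 : m - 1 - j + 1 = m - j := by omega
    have e2 : (((m - j : ℕ)) : ℝ) = (m : ℝ) - j := Nat.cast_sub (le_of_lt hj')
    rw [← e2, ← e1]
    push_cast [show (1:ℕ) ≤ m - j by omega, show j ≤ m - 1 by omega]
    ring
  rw [h2, h]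
  have h4 := prod_shift 0 m
  simp only [Nat.cast_zero, zero_add, Nat.factorial_zero, Nat.cast_one, div_one] at h4
  rw [← h4]
  refine Finset.prod_congr rfl fun j hj => by ring




/-- base case: n = i -/
lemma base_prod (i : ℕ) (hi : 1 ≤ i) :
    ∏ j ∈ Ico 1 i, ((j:ℝ)^2 / (((i:ℝ)+j) * ((i:ℝ)-j)))
      = 2 * ∏ t ∈ Icc 1 i, (((i:ℝ)+1-t)/((i:ℝ)+t)) := by
  have c1 : ∏ j ∈ Ico 1 i, ((j:ℝ)^2 / (((i:ℝ)+j) * ((i:ℝ)-j)))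
      = (∏ j ∈ Ico 1 i, (j:ℝ))^2 / ((∏ j ∈ Ico 1 i, ((i:ℝ)+j)) * (∏ j ∈ Ico 1 i, ((i:ℝ)-j))) := by
    rw [prod_div_distrib, prod_mul_distrib, prod_pow]
  have c2 : ∏ t ∈ Icc 1 i, (((i:ℝ)+1-t)/((i:ℝ)+t))
      = (∏ t ∈ Icc 1 i, ((i:ℝ)+1-t)) / (∏ t ∈ Icc 1 i, ((i:ℝ)+t)) := prod_div_distrib _ _
  have p1 : ∏ j ∈ Ico 1 i, (j:ℝ) = Nat.factorial (i-1) := by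
    rw [prod_Ico_eq_prod_range]
    have := prod_shift 0 (i-1)
    simp only [Nat.cast_zero, zero_add, Nat.factorial_zero, Nat.cast_one, div_one] at this
    rw [← this]
    exact Finset.prod_congr rfl fun t _ => by push_cast; ring
  have p2 : ∏ j ∈ Ico 1 i, ((i:ℝ)+j) = Nat.factorial (i+(i-1)) / Nat.factorial i := by
    rw [prod_Ico_eq_prod_range, ← prod_shift i (i-1)]
    exact Finset.prod_congr rfl fun t _ => by push_cast; ring
  have p3 : ∏ j ∈ Ico 1 i, ((i:ℝ)-j) = Nat.factorial (i-1) := by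
    rw [prod_Ico_eq_prod_range, ← prod_reflect (i-1)]
    refine Finset.prod_congr rfl fun t _ => ?_
    push_cast [Nat.cast_sub hi]
    ring
  have p4 : ∏ t ∈ Icc 1 i, ((i:ℝ)+1-t) = Nat.factorial i := by
    have : Icc 1 i = Ico 1 (i+1) := by rw [Finset.Ico_add_one_right_eq_Icc]
    rw [this, prod_Ico_eq_prod_range, ← prod_reflect i]
    refine Finset.prod_congr rfl fun t _ => by push_cast; ring
  have p5 : ∏ t ∈ Icc 1 i, ((i:ℝ)+t) = Nat.factorial (i+i) / Nat.factorial i := by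
    have : Icc 1 i = Ico 1 (i+1) := by rw [Finset.Ico_add_one_right_eq_Icc]
    rw [this, prod_Ico_eq_prod_range, ← prod_shift i i]
    refine Finset.prod_congr rfl fun t _ => by push_cast; ring
  rw [c1, c2, p1, p2, p3, p4, p5]
  have e1 : (Nat.factorial i : ℝ) = i * Nat.factorial (i-1) := by
    have : i = (i-1) + 1 := by omega
    rw [this, Nat.factorial_succ]
    push_cast [Nat.cast_sub hi]
    ring
  have e2 : (Nat.factorial (i+i) : ℝ) = (i+i) * Nat.factorial (i+(i-1)) := by
    have h' : i + i = (i + (i-1)) + 1 := by omega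
    rw [h', Nat.factorial_succ]
    push_cast [Nat.cast_sub hi]
    ring
  have hne1 : (Nat.factorial (i-1) : ℝ) ≠ 0 := by positivity
  have hne2 : (Nat.factorial i : ℝ) ≠ 0 := by positivity
  have hne3 : (Nat.factorial (i+(i-1)) : ℝ) ≠ 0 := by positivity
  have hi' : (0:ℝ) < i := by exact_mod_cast hi
  rw [e2, e1]
  field_simp
  ring




lemma tele1 (n : ℕ) : ∀ i : ℕ, i ≤ n →
    ∏ t ∈ Icc 1 i, (((n:ℝ)+2-t)/((n:ℝ)+1-t)) = ((n:ℝ)+1)/((n:ℝ)+1-i)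
  | 0, _ => by
    have h0 : (n:ℝ)+1 ≠ 0 := by positivity
    simp [div_self h0]
  | (i+1), h => by
    rw [Finset.prod_Icc_succ_top (Nat.one_le_iff_ne_zero.mpr (Nat.succ_ne_zero i)),
      tele1 n i (by omega)]
    have h1 : (n:ℝ)+1-i ≠ 0 := by
      have : (i:ℝ) ≤ n := by exact_mod_cast (by omega : i ≤ n)
      nlinarith
    have h2 : (n:ℝ)+1-(i+1) ≠ 0 := by
      have : ((i:ℝ)+1) ≤ n := by exact_mod_cast (h : i+1 ≤ n)
      intro hc; nlinarith
    have h2' : (n:ℝ) - i ≠ 0 := by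
      have : ((i:ℝ)+1) ≤ n := by exact_mod_cast (h : i+1 ≤ n)
      intro hc; nlinarith
    push_cast
    field_simp
    ring

lemma tele2 (n : ℕ) : ∀ i : ℕ,
    ∏ t ∈ Icc 1 i, (((n:ℝ)+t)/((n:ℝ)+1+t)) = ((n:ℝ)+1)/((n:ℝ)+1+i)
  | 0 => by
    have h0 : (n:ℝ)+1 ≠ 0 := by positivity
    simp [div_self h0]
  | (i+1) => by
    rw [Finset.prod_Icc_succ_top (Nat.one_le_iff_ne_zero.mpr (Nat.succ_ne_zero i)),
      tele2 n i]
    have h1 : (n:ℝ)+1+i ≠ 0 := by positivity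
    have h2 : (n:ℝ)+1+(i+1) ≠ 0 := by positivity
    push_cast
    field_simp
    ring

lemma main_prod (i : ℕ) (hi : 1 ≤ i) : ∀ n, i ≤ n →
    ∏ j ∈ (Icc 1 n).erase i, ((j:ℝ)^2 / (((i:ℝ)+j) * |(i:ℝ)-j|))
      = 2 * ∏ t ∈ Icc 1 i, (((n:ℝ)+1-t)/((n:ℝ)+t)) := by
  refine Nat.le_induction ?_ ?_
  · -- base n = i
    have hset : (Icc 1 i).erase i = Ico 1 i := by
      ext x
      simp only [Finset.mem_erase, Finset.mem_Icc, Finset.mem_Ico]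
      omega
    rw [hset, ← base_prod i hi]
    refine Finset.prod_congr rfl fun j hj => ?_
    have hj' : j < i := (Finset.mem_Ico.mp hj).2
    have : |(i:ℝ) - j| = (i:ℝ) - j := by
      rw [abs_of_pos]
      have : (j:ℝ) < i := by exact_mod_cast hj'
      linarith
    rw [this]
  · -- step
    intro n hn ih
    have hmem : (n+1) ∉ (Icc 1 n).erase i := by simp
    have hset : (Icc 1 (n+1)).erase i = insert (n+1) ((Icc 1 n).erase i) := by
      ext x; simp [Finset.mem_erase, Finset.mem_Icc, Finset.mem_insert]; omega
    rw [hset, Finset.prod_insert hmem, ih]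
    have habs : |(i:ℝ) - (n+1:ℕ)| = ((n:ℝ)+1) - i := by
      rw [abs_of_nonpos]
      · push_cast; ring
      · have : (i:ℝ) ≤ n := by exact_mod_cast hn
        push_cast; linarith
    rw [habs]
    have hsplit : ∏ t ∈ Icc 1 i, (((n:ℝ)+1+1-t)/((n:ℝ)+1+t))
        = (∏ t ∈ Icc 1 i, (((n:ℝ)+1-t)/((n:ℝ)+t)))
          * ((∏ t ∈ Icc 1 i, (((n:ℝ)+2-t)/((n:ℝ)+1-t)))
          * (∏ t ∈ Icc 1 i, (((n:ℝ)+t)/((n:ℝ)+1+t)))) := by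
      rw [← Finset.prod_mul_distrib, ← Finset.prod_mul_distrib]
      refine Finset.prod_congr rfl fun t ht => ?_
      have ht' := Finset.mem_Icc.mp ht
      have h1 : (n:ℝ)+1-t ≠ 0 := by
        have : (t:ℝ) ≤ n := by exact_mod_cast le_trans ht'.2 hn
        intro hc; nlinarith
      have h2 : (n:ℝ)+t ≠ 0 := by
        have : (1:ℝ) ≤ t := by exact_mod_cast ht'.1
        positivity
      have h3 : (n:ℝ)+1+t ≠ 0 := by positivity
      field_simp
      ring
    push_cast at hsplit ⊢
    rw [hsplit, tele1 n i hn, tele2 n i]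
    have h4 : (n:ℝ)+1-i ≠ 0 := by
      have : (i:ℝ) ≤ n := by exact_mod_cast hn
      intro hc; nlinarith
    have h5 : (n:ℝ)+1+i ≠ 0 := by positivity
    have h6 : (i:ℝ)+((n:ℝ)+1) ≠ 0 := by positivity
    field_simp
    ring




lemma sum_odd (i : ℕ) : ∑ t ∈ Icc 1 i, (2*(t:ℝ)-1) = (i:ℝ)^2 := by
  induction i with
  | zero => simp
  | succ k ih =>
    rw [Finset.sum_Icc_succ_top (by omega : 1 ≤ k+1), ih]
    push_cast; ring

lemma decay (i n : ℕ) (hi : 1 ≤ i) (hin : i ≤ n) :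
    ∏ t ∈ Icc 1 i, (((n:ℝ)+1-t)/((n:ℝ)+t)) ≤ Real.exp (-(i:ℝ)^2/(2*n)) := by
  have hn : (1:ℝ) ≤ n := by exact_mod_cast le_trans hi hin
  have step : ∀ t ∈ Icc 1 i, ((n:ℝ)+1-t)/((n:ℝ)+t) ≤ Real.exp (-(2*(t:ℝ)-1)/(2*n)) := by
    intro t ht
    have ht' := Finset.mem_Icc.mp ht
    have ht1 : (1:ℝ) ≤ t := by exact_mod_cast ht'.1
    have htn : (t:ℝ) ≤ n := by exact_mod_cast le_trans ht'.2 hin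
    have hpos : (0:ℝ) < (n:ℝ)+t := by linarith
    have e1 : ((n:ℝ)+1-t)/((n:ℝ)+t) = 1 - (2*t-1)/((n:ℝ)+t) := by
      field_simp
      ring
    rw [e1]
    have e2 : 1 - (2*(t:ℝ)-1)/((n:ℝ)+t) ≤ Real.exp (-((2*(t:ℝ)-1)/((n:ℝ)+t))) := by
      have := Real.add_one_le_exp (-((2*(t:ℝ)-1)/((n:ℝ)+t)))
      linarith
    refine le_trans e2 (Real.exp_le_exp.mpr ?_)
    rw [neg_div, neg_le_neg_iff]
    apply div_le_div_of_nonneg_left (by linarith) hpos (by linarith)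
  calc ∏ t ∈ Icc 1 i, (((n:ℝ)+1-t)/((n:ℝ)+t))
      ≤ ∏ t ∈ Icc 1 i, Real.exp (-(2*(t:ℝ)-1)/(2*n)) := by
        refine Finset.prod_le_prod (fun t ht => ?_) step
        have ht' := Finset.mem_Icc.mp ht
        have htn : (t:ℝ) ≤ n := by exact_mod_cast le_trans ht'.2 hin
        have ht1 : (1:ℝ) ≤ t := by exact_mod_cast ht'.1
        have : (0:ℝ) < (n:ℝ)+t := by linarith
        apply div_nonneg (by linarith) (by linarith)
    _ = Real.exp (∑ t ∈ Icc 1 i, -(2*(t:ℝ)-1)/(2*n)) := (Real.exp_sum _ _).symm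
    _ = Real.exp (-(i:ℝ)^2/(2*n)) := by
        congr 1
        simp only [neg_div]
        rw [Finset.sum_neg_distrib, ← Finset.sum_div, sum_odd]

lemma sum_sq_inv : ∀ n : ℕ, 1 ≤ n → ∑ i ∈ Icc 1 n, ((i:ℝ)^2)⁻¹ ≤ 2 - 1/n
  | 1, _ => by norm_num
  | (n+2), _ => by
    rw [Finset.sum_Icc_succ_top (by omega : 1 ≤ n+2)]
    have ih := sum_sq_inv (n+1) (by omega)
    have h1 : (0:ℝ) < (n:ℝ)+1 := by positivity
    have h2 : (0:ℝ) < (n:ℝ)+2 := by positivity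
    have key : (((n:ℝ)+2)^2)⁻¹ ≤ 1/((n:ℝ)+1) - 1/((n:ℝ)+2) := by
      have e : 1/((n:ℝ)+1) - 1/((n:ℝ)+2) = (((n:ℝ)+1)*((n:ℝ)+2))⁻¹ := by
        field_simp
        ring
      rw [e]
      apply inv_anti₀ (by positivity)
      nlinarith
    push_cast at ih ⊢
    rw [show ((n:ℝ)+1+1) = (n:ℝ)+2 from by ring]
    linarith




noncomputable def AA (n j : ℕ) : ℝ := 32*(n:ℝ)^3 / (j:ℝ)^2

def KK (n j : ℕ) : ℕ := 32*n^3 / j^2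

lemma AA_pos {n j : ℕ} (hn : 1 ≤ n) (hj : 1 ≤ j) : 0 < AA n j := by
  unfold AA
  have h1 : (0:ℝ) < n := by exact_mod_cast hn
  have h2 : (0:ℝ) < j := by exact_mod_cast hj
  positivity

lemma KK_le_AA (n j : ℕ) : (KK n j : ℝ) ≤ AA n j := by
  unfold AA KK
  have h := Nat.cast_div_le (m := 32*n^3) (n := j^2) (α := ℝ)
  push_cast at h ⊢
  exact h

lemma AA_lt_KK_add_one {n j : ℕ} (hj : 1 ≤ j) : AA n j < KK n j + 1 := by
  have hj2 : 0 < j^2 := by positivity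
  have hmod : 32*n^3 % j^2 < j^2 := Nat.mod_lt _ hj2
  have hdm : j^2 * (32*n^3 / j^2) + 32*n^3 % j^2 = 32*n^3 := Nat.div_add_mod _ _
  have h : 32*n^3 < (32*n^3/j^2 + 1) * j^2 := by
    calc 32*n^3 = j^2 * (32*n^3/j^2) + 32*n^3 % j^2 := hdm.symm
      _ < j^2 * (32*n^3/j^2) + j^2 := Nat.add_lt_add_left hmod _
      _ = (32*n^3/j^2 + 1) * j^2 := by ring
  unfold AA KK
  have hj2' : (0:ℝ) < (j:ℝ)^2 := by
    have : (0:ℝ) < j := by exact_mod_cast hj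
    positivity
  rw [div_lt_iff₀ hj2']
  exact_mod_cast h

lemma KK_pos {n j : ℕ} (hj : 1 ≤ j) (hjn : j ≤ n) : 1 ≤ KK n j := by
  unfold KK
  rw [Nat.one_le_div_iff (by positivity)]
  calc j^2 ≤ n^2 := Nat.pow_le_pow_left hjn 2
    _ ≤ 32*n^3 := by nlinarith [hjn, hj]

lemma KK_le {n j : ℕ} : KK n j ≤ 32*n^3 := Nat.div_le_self _ _

lemma AA_gap {n i j : ℕ} (h1i : 1 ≤ i) (hij : i < j) (hjn : j ≤ n) :
    64 ≤ AA n i - AA n j := by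
  have hi : (1:ℝ) ≤ i := by exact_mod_cast h1i
  have hj : (i:ℝ) + 1 ≤ j := by exact_mod_cast hij
  have hn : (j:ℝ) ≤ n := by exact_mod_cast hjn
  have hipos : (0:ℝ) < i := by linarith
  have hjpos : (0:ℝ) < j := by linarith
  unfold AA
  rw [div_sub_div _ _ (by positivity) (by positivity), le_div_iff₀ (by positivity)]
  -- goal : 64 * ((i:ℝ)^2 * (j:ℝ)^2) ≤ 32*n^3*j^2 - 32*n^3*i^2 (some ordering)
  have hj1 : (0:ℝ) ≤ (j:ℝ) - 1 := by linarith
  have s1 : (i:ℝ) ≤ (j:ℝ) - 1 := by linarith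
  have s2 : ((j:ℝ)-1)*(j:ℝ) ≤ (n:ℝ)*(n:ℝ) := by nlinarith
  have s3 : (((j:ℝ)-1)*(j:ℝ))*(((j:ℝ)-1)*(j:ℝ)) ≤ (((j:ℝ)-1)*(j:ℝ))*((n:ℝ)*(n:ℝ)) :=
    mul_le_mul_of_nonneg_left s2 (mul_nonneg hj1 hjpos.le)
  have s4 : 2*(((j:ℝ)-1)*(j:ℝ)) ≤ (j:ℝ)*(2*(j:ℝ)-1) := by nlinarith
  have s5 : (n:ℝ)*(n:ℝ)*((j:ℝ)*(2*(j:ℝ)-1)) ≤ (n:ℝ)^3*(2*(j:ℝ)-1) := by nlinarith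
  have s6 : (i:ℝ)^2 ≤ ((j:ℝ)-1)^2 := by nlinarith
  have s7 : 2*(j:ℝ)-1 ≤ (j:ℝ)^2 - (i:ℝ)^2 := by nlinarith
  have u1 : 2*((i:ℝ)^2*(j:ℝ)^2) ≤ 2*(((j:ℝ)-1)^2*(j:ℝ)^2) := by
    nlinarith [mul_le_mul_of_nonneg_right s6 (show (0:ℝ) ≤ (j:ℝ)^2 by positivity)]
  have u3 : 2*((((j:ℝ)-1)*(j:ℝ))*((n:ℝ)*(n:ℝ))) ≤ ((j:ℝ)*(2*(j:ℝ)-1))*((n:ℝ)*(n:ℝ)) := by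
    nlinarith [mul_le_mul_of_nonneg_right s4 (show (0:ℝ) ≤ (n:ℝ)*(n:ℝ) by positivity)]
  have u5 : (n:ℝ)^3*(2*(j:ℝ)-1) ≤ (n:ℝ)^3*((j:ℝ)^2-(i:ℝ)^2) :=
    mul_le_mul_of_nonneg_left s7 (by positivity)
  nlinarith [u1, s3, u3, s5, u5]
  

lemma abs_AA_gap {n i j : ℕ} (hi : 1 ≤ i) (hin : i ≤ n) (hj : 1 ≤ j) (hjn : j ≤ n)
    (hij : i ≠ j) : 64 ≤ |AA n i - AA n j| := by
  rcases lt_or_gt_of_ne hij with h | h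
  · have hg := AA_gap hi h hjn
    rw [abs_of_nonneg (by linarith)]
    linarith
  · have hg := AA_gap hj h hin
    rw [abs_of_nonpos (by linarith)]
    linarith

lemma abs_KK_gap {n i j : ℕ} (hi : 1 ≤ i) (hin : i ≤ n) (hj : 1 ≤ j) (hjn : j ≤ n)
    (hij : i ≠ j) : |AA n i - AA n j| - 1 ≤ |(KK n j : ℝ) - (KK n i : ℝ)| := by
  have k1 := KK_le_AA n i
  have k2 := KK_le_AA n j
  have k3 := AA_lt_KK_add_one (n := n) hi
  have k4 := AA_lt_KK_add_one (n := n) hj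
  rcases lt_or_gt_of_ne hij with h | h
  · have hg := AA_gap hi h hjn
    rw [abs_of_nonneg (by linarith), abs_of_nonpos (by linarith)]
    linarith
  · have hg := AA_gap hj h hin
    rw [abs_of_nonpos (by linarith), abs_of_nonneg (by linarith)]
    linarith

lemma AA_diff {n i j : ℕ} (hi : 1 ≤ i) (hj : 1 ≤ j) :
    AA n i - AA n j = 32*(n:ℝ)^3 * ((j:ℝ)^2-(i:ℝ)^2) / ((i:ℝ)^2 * (j:ℝ)^2) := by
  have hiR : (1:ℝ) ≤ i := by exact_mod_cast hi
  have hjR : (1:ℝ) ≤ j := by exact_mod_cast hj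
  unfold AA
  field_simp

lemma abs_AA_diff {n i j : ℕ} (hn : 1 ≤ n) (hi : 1 ≤ i) (hj : 1 ≤ j) :
    |AA n i - AA n j| = 32*(n:ℝ)^3 * (((i:ℝ)+j) * |(i:ℝ)-j|) / ((i:ℝ)^2 * (j:ℝ)^2) := by
  have hiR : (1:ℝ) ≤ i := by exact_mod_cast hi
  have hjR : (1:ℝ) ≤ j := by exact_mod_cast hj
  have hnR : (1:ℝ) ≤ n := by exact_mod_cast hn
  have hip : (0:ℝ) < i := by linarith
  have hjp : (0:ℝ) < j := by linarith
  have hnp : (0:ℝ) < n := by linarith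
  rw [AA_diff hi hj, abs_div, abs_of_pos (mul_pos (pow_pos hip 2) (pow_pos hjp 2))]
  congr 1
  rw [abs_mul, abs_of_pos (by nlinarith [pow_pos hnp 3] : (0:ℝ) < 32*(n:ℝ)^3)]
  congr 1
  rw [show (j:ℝ)^2 - (i:ℝ)^2 = ((i:ℝ)+j)*((j:ℝ)-i) from by ring, abs_mul,
    abs_of_pos (by linarith : (0:ℝ) < (i:ℝ)+j), abs_sub_comm]

lemma prod_K_bound {n i : ℕ} (hi : 1 ≤ i) (hin : i ≤ n) :
    ∏ j ∈ (Icc 1 n).erase i, ((KK n i : ℝ) / |(KK n j : ℝ) - (KK n i : ℝ)|) ≤ 2 := by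
  have hn : 1 ≤ n := le_trans hi hin
  have hnR : (1:ℝ) ≤ n := by exact_mod_cast hn
  have hiR : (1:ℝ) ≤ i := by exact_mod_cast hi
  set E := (Icc 1 n).erase i with hE
  have hmem : ∀ j ∈ E, 1 ≤ j ∧ j ≤ n ∧ j ≠ i := by
    intro j hj
    have h1 := Finset.mem_erase.mp hj
    have h2 := Finset.mem_Icc.mp h1.2
    exact ⟨h2.1, h2.2, h1.1⟩
  have absne : ∀ j : ℕ, j ≠ i → 1 ≤ |(i:ℝ) - (j:ℝ)| := by
    intro j hjne
    rcases lt_or_gt_of_ne hjne with h | h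
    · have hj' : (j:ℝ) + 1 ≤ i := by exact_mod_cast h
      rw [abs_of_pos (by linarith)]
      linarith
    · have hj' : (i:ℝ) + 1 ≤ j := by exact_mod_cast h
      rw [abs_of_neg (by linarith)]
      linarith
  -- pointwise bound
  have point : ∀ j ∈ E, (KK n i : ℝ) / |(KK n j : ℝ) - (KK n i : ℝ)|
      ≤ ((j:ℝ)^2 / (((i:ℝ)+j) * |(i:ℝ)-j|)) * (1 + 2/|AA n i - AA n j|) := by
    intro j hj
    obtain ⟨hj1, hjn, hjne⟩ := hmem j hj
    have hjR : (1:ℝ) ≤ j := by exact_mod_cast hj1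
    set D := |AA n i - AA n j| with hD
    have hD64 : 64 ≤ D := abs_AA_gap hi hin hj1 hjn hjne.symm
    have hKgap : D - 1 ≤ |(KK n j : ℝ) - (KK n i : ℝ)| := abs_KK_gap hi hin hj1 hjn hjne.symm
    have hKpos : (0:ℝ) ≤ (KK n i : ℝ) := by positivity
    have l1 : (KK n i : ℝ) / |(KK n j : ℝ) - (KK n i : ℝ)| ≤ AA n i / (D - 1) :=
      div_le_div₀ (le_trans hKpos (KK_le_AA n i)) (KK_le_AA n i) (by linarith) hKgap
    have hApos : 0 < AA n i := AA_pos hn hi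
    have l2 : AA n i / (D - 1) ≤ (AA n i / D) * (1 + 2/D) := by
      have hDpos : (0:ℝ) < D := by linarith
      have hD1 : (0:ℝ) < D - 1 := by linarith
      have key : (AA n i / D) * (1 + 2/D) - AA n i / (D - 1)
          = AA n i * (D - 2) / (D^2 * (D-1)) := by
        field_simp
        ring
      have pos : (0:ℝ) ≤ AA n i * (D - 2) / (D^2 * (D-1)) :=
        div_nonneg (mul_nonneg hApos.le (by linarith))
          (mul_nonneg (sq_nonneg D) (by linarith))
      linarith [key, pos]
    have l3 : AA n i / D = (j:ℝ)^2 / (((i:ℝ)+j) * |(i:ℝ)-j|) := by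
      rw [hD, abs_AA_diff hn hi hj1]
      unfold AA
      have habs2 : (0:ℝ) < |(i:ℝ)-(j:ℝ)| := by linarith [absne j hjne]
      have hsum : (0:ℝ) < (i:ℝ)+j := by linarith
      field_simp
    calc (KK n i : ℝ) / |(KK n j : ℝ) - (KK n i : ℝ)| ≤ AA n i / (D - 1) := l1
      _ ≤ (AA n i / D) * (1 + 2/D) := l2
      _ = ((j:ℝ)^2 / (((i:ℝ)+j) * |(i:ℝ)-j|)) * (1 + 2/D) := by rw [l3]
  -- product bound
  have nonneg : ∀ j ∈ E, (0:ℝ) ≤ (KK n i : ℝ) / |(KK n j : ℝ) - (KK n i : ℝ)| := by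
    intro j hj
    positivity
  have step1 := Finset.prod_le_prod nonneg point
  rw [Finset.prod_mul_distrib] at step1
  have e1 : ∏ j ∈ E, ((j:ℝ)^2 / (((i:ℝ)+j) * |(i:ℝ)-j|))
      = 2 * ∏ t ∈ Icc 1 i, (((n:ℝ)+1-t)/((n:ℝ)+t)) := main_prod i hi n hin
  -- exp bound for the fudge product
  have fudge : ∏ j ∈ E, (1 + 2/|AA n i - AA n j|) ≤ Real.exp ((i:ℝ)^2/(16*n)) := by
    have pb : ∀ j ∈ E, (1 + 2/|AA n i - AA n j|) ≤ Real.exp ((i:ℝ)^2/(16*(n:ℝ)^2)) := by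
      intro j hj
      obtain ⟨hj1, hjn, hjne⟩ := hmem j hj
      have hjR : (1:ℝ) ≤ j := by exact_mod_cast hj1
      have hjnR : (j:ℝ) ≤ n := by exact_mod_cast hjn
      have habs3 : 1 ≤ |(i:ℝ)-(j:ℝ)| := absne j hjne
      have hbound : 2/|AA n i - AA n j| ≤ (i:ℝ)^2/(16*(n:ℝ)^2) := by
        have hDlb : 32*(n:ℝ)^2 / (i:ℝ)^2 ≤ |AA n i - AA n j| := by
          rw [abs_AA_diff hn hi hj1, div_le_div_iff₀ (by positivity) (by positivity)]
          have b1 : (j:ℝ)^2 ≤ (n:ℝ)*(((i:ℝ)+j)*|(i:ℝ)-j|) := by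
            have c1 : (j:ℝ)^2 ≤ (n:ℝ)*(j:ℝ) := by nlinarith
            have c2 : (j:ℝ) ≤ ((i:ℝ)+j)*|(i:ℝ)-j| := by nlinarith
            nlinarith
          have b2 := mul_le_mul_of_nonneg_left b1
            (show (0:ℝ) ≤ 32*(n:ℝ)^2*(i:ℝ)^2 by positivity)
          nlinarith [b2]
        have h16 : (0:ℝ) < 32*(n:ℝ)^2/(i:ℝ)^2 := by positivity
        calc 2/|AA n i - AA n j| ≤ 2/(32*(n:ℝ)^2/(i:ℝ)^2) :=
              div_le_div_of_nonneg_left (by norm_num) h16 hDlb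
          _ = (i:ℝ)^2/(16*(n:ℝ)^2) := by
              field_simp
              ring
      have he := Real.add_one_le_exp (2/|AA n i - AA n j|)
      have hmono := Real.exp_le_exp.mpr hbound
      linarith
    have expnn : (0:ℝ) ≤ Real.exp ((i:ℝ)^2/(16*(n:ℝ)^2)) := (Real.exp_pos _).le
    calc ∏ j ∈ E, (1 + 2/|AA n i - AA n j|)
        ≤ ∏ j ∈ E, Real.exp ((i:ℝ)^2/(16*(n:ℝ)^2)) := by
          refine Finset.prod_le_prod (fun j hj => ?_) pb
          obtain ⟨hj1, hjn, hjne⟩ := hmem j hj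
          have hD64 := abs_AA_gap hi hin hj1 hjn hjne.symm
          positivity
      _ = Real.exp ((i:ℝ)^2/(16*(n:ℝ)^2)) ^ E.card := Finset.prod_const _
      _ ≤ Real.exp ((i:ℝ)^2/(16*n)) := by
          rw [← Real.exp_nat_mul]
          apply Real.exp_le_exp.mpr
          have hcard : (E.card : ℝ) ≤ n := by
            have hc1 : E.card ≤ (Icc 1 n).card := Finset.card_le_card (Finset.erase_subset _ _)
            have hc2 : (Icc 1 n).card = n := by rw [Nat.card_Icc]; omega
            exact_mod_cast le_trans hc1 (le_of_eq hc2)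
          have hmul : (E.card : ℝ) * ((i:ℝ)^2/(16*(n:ℝ)^2)) ≤ (n:ℝ) * ((i:ℝ)^2/(16*(n:ℝ)^2)) :=
            mul_le_mul_of_nonneg_right hcard (by positivity)
          have hid : (n:ℝ) * ((i:ℝ)^2/(16*(n:ℝ)^2)) = (i:ℝ)^2/(16*(n:ℝ)) := by
            field_simp
          linarith [hid ▸ hmul]
  -- combine
  have d1 := decay i n hi hin
  have nn1 : (0:ℝ) ≤ ∏ j ∈ E, (1 + 2/|AA n i - AA n j|) := by
    apply Finset.prod_nonneg
    intro j hj
    obtain ⟨hj1, hjn, hjne⟩ := hmem j hj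
    have hD64 := abs_AA_gap hi hin hj1 hjn hjne.symm
    positivity
  calc ∏ j ∈ E, ((KK n i : ℝ) / |(KK n j : ℝ) - (KK n i : ℝ)|)
      ≤ (∏ j ∈ E, ((j:ℝ)^2 / (((i:ℝ)+j) * |(i:ℝ)-j|)))
          * ∏ j ∈ E, (1 + 2/|AA n i - AA n j|) := step1
    _ = (2 * ∏ t ∈ Icc 1 i, (((n:ℝ)+1-t)/((n:ℝ)+t)))
          * ∏ j ∈ E, (1 + 2/|AA n i - AA n j|) := by rw [e1]
    _ ≤ (2 * Real.exp (-(i:ℝ)^2/(2*n))) * Real.exp ((i:ℝ)^2/(16*n)) := by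
        apply mul_le_mul (by linarith [d1]) fudge nn1 (by positivity)
    _ = 2 * Real.exp (-(i:ℝ)^2/(2*n) + (i:ℝ)^2/(16*n)) := by
        rw [mul_assoc, ← Real.exp_add]
    _ ≤ 2 * 1 := by
        have hle : -(i:ℝ)^2/(2*n) + (i:ℝ)^2/(16*n) ≤ 0 := by
          rw [neg_div]
          have h1 : (i:ℝ)^2/(16*n) ≤ (i:ℝ)^2/(2*n) := by
            apply div_le_div_of_nonneg_left (by positivity) (by positivity)
            linarith
          linarith
        have := Real.exp_le_one_iff.mpr hle
        linarith
    _ = 2 := by ring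



lemma pigeon (w : ℕ) (p : Polynomial ℝ) (hw : 0 < w)
    (h2 : p.eval (1 / (w : ℝ)) ≤ 1 / 3)
    (h3 : 2 / 3 ≤ p.eval (1 / (2 * w : ℝ))) :
    ∃ ks : ℕ, w ≤ ks ∧ ks < 2*w ∧
      1/(3*(w:ℝ)) ≤ p.eval (((ks:ℝ)+1)⁻¹) - p.eval ((ks:ℝ)⁻¹) := by
  set f : ℕ → ℝ := fun k => p.eval ((k:ℝ))⁻¹ with hf
  have tel : ∑ t ∈ range w, (f (w+t+1) - f (w+t)) = f (w+w) - f (w+0) := by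
    have := Finset.sum_range_sub (fun t => f (w+t)) w
    simpa [add_assoc] using this
  by_contra hcon
  push_neg at hcon
  have hterm : ∀ t ∈ range w, f (w+t+1) - f (w+t) < 1/(3*(w:ℝ)) := by
    intro t _
    have h := hcon (w+t) (Nat.le_add_right _ _) (by
      have := Finset.mem_range.mp ‹t ∈ range w›
      omega)
    calc f (w+t+1) - f (w+t)
        = p.eval (((w+t:ℕ):ℝ)+1)⁻¹ - p.eval (((w+t:ℕ):ℝ))⁻¹ := by
          simp only [hf]
          push_cast
          norm_num
      _ < 1/(3*(w:ℝ)) := h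
  have hsum : ∑ t ∈ range w, (f (w+t+1) - f (w+t)) < ∑ t ∈ range w, 1/(3*(w:ℝ)) := by
    apply Finset.sum_lt_sum_of_nonempty ⟨0, Finset.mem_range.mpr hw⟩ hterm
  rw [tel, Finset.sum_const, Finset.card_range] at hsum
  have hwR : (0:ℝ) < w := by exact_mod_cast hw
  have hconst : (w:ℕ) • (1/(3*(w:ℝ))) = 1/3 := by
    rw [nsmul_eq_mul]
    field_simp
  rw [hconst] at hsum
  have e1 : f (w+w) = p.eval (1 / (2 * w : ℝ)) := by
    simp only [hf]
    push_cast
    rw [show ((w:ℝ)+w) = 2*(w:ℝ) from by ring, one_div]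
  have e2 : f (w+0) = p.eval (1 / (w : ℝ)) := by
    simp only [hf]
    norm_num
  rw [e1, e2] at hsum
  linarith




lemma KK_lt {n i j : ℕ} (hi : 1 ≤ i) (hij : i < j) (hjn : j ≤ n) : KK n j < KK n i := by
  have h1 := KK_le_AA n j
  have h2 := AA_gap hi hij hjn
  have h3 := AA_lt_KK_add_one (n := n) hi
  have : (KK n j : ℝ) < KK n i := by linarith
  exact_mod_cast this

/-- The core contradiction: a degree-≤ n polynomial bounded at inverse integers with a
(1/(3w))-jump between adjacent inverse integers in [w, 2w] forces w ≤ 2000 n³. -/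
lemma no_big (w n ks : ℕ) (p : Polynomial ℝ) (hw : 0 < w) (hn : 1 ≤ n)
    (hdeg : p.natDegree ≤ n)
    (h1 : ∀ k : ℕ, 1 ≤ k → k ≤ 2*w → |p.eval (1/(k:ℝ))| ≤ 1)
    (hks1 : w ≤ ks) (hks2 : ks < 2*w)
    (hjump : 1/(3*(w:ℝ)) ≤ p.eval (((ks:ℝ)+1)⁻¹) - p.eval ((ks:ℝ)⁻¹)) :
    ¬ (2000*n^3 < w) := by
  intro hbig
  -- basic real facts
  have hwR : (1:ℝ) ≤ w := by exact_mod_cast hw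
  have hnR : (1:ℝ) ≤ n := by exact_mod_cast hn
  have hksR : (w:ℝ) ≤ ks := by exact_mod_cast hks1
  have hbigR : 2000*(n:ℝ)^3 < w := by exact_mod_cast hbig
  have hkspos : (0:ℝ) < ks := by linarith
  -- the nodes
  set κ : ℕ → ℕ := fun j => if j = 0 then ks+1 else KK n j with hκ
  set v : ℕ → ℝ := fun j => (κ j : ℝ)⁻¹ with hv
  set s : Finset ℕ := range (n+1) with hs
  have hKlt : ∀ j, 1 ≤ j → j ≤ n → KK n j < w := by
    intro j hj hjn
    have : KK n j ≤ 32*n^3 := KK_le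
    omega
  have hκpos : ∀ j ∈ s, 1 ≤ κ j := by
    intro j hj
    by_cases h0 : j = 0
    · simp [hκ, h0]
    · have hj' := Finset.mem_range.mp hj
      simp only [hκ, h0, if_false]
      exact KK_pos (by omega) (by omega)
  have hκle : ∀ j ∈ s, κ j ≤ 2*w := by
    intro j hj
    by_cases h0 : j = 0
    · simp only [hκ, h0, if_true]
      omega
    · have hj' := Finset.mem_range.mp hj
      simp only [hκ, h0, if_false]
      have := hKlt j (by omega) (by omega)
      omega
  have hκinj : ∀ j ∈ s, ∀ l ∈ s, j ≠ l → κ j ≠ κ l := by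
    intro j hj l hl hjl
    have hj' := Finset.mem_range.mp hj
    have hl' := Finset.mem_range.mp hl
    by_cases h0 : j = 0
    · subst h0
      have hl0 : l ≠ 0 := fun h => hjl h.symm
      simp only [hκ, if_true, hl0, if_false, if_pos rfl]
      have := hKlt l (by omega) (by omega)
      omega
    · by_cases h0' : l = 0
      · subst h0'
        simp only [hκ, h0, if_false, if_pos rfl]
        have := hKlt j (by omega) (by omega)
        omega
      · simp only [hκ, h0, h0', if_false]
        rcases Nat.lt_or_ge j l with h | h
        · exact Nat.ne_of_gt (KK_lt (by omega) h (by omega))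
        · have : l < j := by omega
          exact Nat.ne_of_lt (KK_lt (by omega) this (by omega))
  have hvinj : Set.InjOn v s := by
    intro j hj l hl hjl
    by_contra hne
    have hκj := hκpos j (by simpa using hj)
    have hκl := hκpos l (by simpa using hl)
    have hne' := hκinj j (by simpa using hj) l (by simpa using hl) hne
    apply hne'
    have : ((κ j : ℝ))⁻¹ = ((κ l : ℝ))⁻¹ := hjl
    have hκjR : (0:ℝ) < κ j := by exact_mod_cast hκj
    have hκlR : (0:ℝ) < κ l := by exact_mod_cast hκl
    have h5 : (κ j : ℝ) = κ l := inv_inj.mp this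
    exact_mod_cast h5
  -- interpolation identity at y = 1/ks
  set y : ℝ := (ks:ℝ)⁻¹ with hy
  have hcard : s.card = n+1 := by rw [hs, Finset.card_range]
  have hdeglt : p.degree < s.card := by
    rw [hcard]
    calc p.degree ≤ (p.natDegree : WithBot ℕ) := Polynomial.degree_le_natDegree
      _ < ((n+1 : ℕ) : WithBot ℕ) := by exact_mod_cast Nat.lt_succ_of_le hdeg
  have hinterp := Lagrange.eq_interpolate (v := v) hvinj hdeglt
  set b : ℕ → ℝ := fun j => (Lagrange.basis s v j).eval y with hb
  have heval : p.eval y = ∑ j ∈ s, p.eval (v j) * b j := by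
    conv_lhs => rw [hinterp]
    rw [Lagrange.interpolate_apply, Polynomial.eval_finset_sum]
    exact Finset.sum_congr rfl fun j _ => by rw [Polynomial.eval_mul, Polynomial.eval_C]
  have hsumb : ∑ j ∈ s, b j = 1 := by
    have h := Lagrange.sum_basis hvinj ⟨0, by simp [hs]⟩
    have := congrArg (Polynomial.eval y) h
    rwa [Polynomial.eval_finset_sum, Polynomial.eval_one] at this
  -- difference representation
  have hdiff : p.eval y - p.eval (v 0) = ∑ j ∈ s, (p.eval (v j) - p.eval (v 0)) * b j := by
    rw [heval]
    have : ∑ j ∈ s, (p.eval (v j) - p.eval (v 0)) * b j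
        = ∑ j ∈ s, p.eval (v j) * b j - p.eval (v 0) * ∑ j ∈ s, b j := by
      rw [Finset.mul_sum, ← Finset.sum_sub_distrib]
      exact Finset.sum_congr rfl fun j _ => by ring
    rw [this, hsumb, mul_one]
  -- values at nodes are bounded
  have hvalb : ∀ j ∈ s, |p.eval (v j)| ≤ 1 := by
    intro j hj
    have h1' := h1 (κ j) (hκpos j hj) (hκle j hj)
    rw [one_div] at h1'
    exact h1'
  -- v for positive indices
  have hvj : ∀ j, 1 ≤ j → v j = ((KK n j : ℝ))⁻¹ := by
    intro j hj
    simp only [hv, hκ]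
    rw [if_neg (by omega)]
  have hKKw : ∀ l, 1 ≤ l → l ≤ n → (KK n l : ℝ) < w := by
    intro l h1l h2l
    exact_mod_cast hKlt l h1l h2l
  have hKKpos : ∀ l, 1 ≤ l → l ≤ n → (0:ℝ) < (KK n l : ℝ) := by
    intro l h1l h2l
    exact_mod_cast KK_pos h1l h2l
  -- the key per-index bound
  have hbj : ∀ j ∈ Icc 1 n, |b j| ≤ 128*(n:ℝ)^3/((j:ℝ)^2*(w:ℝ)^2) := by
    intro j hjI
    obtain ⟨hj1, hjn⟩ := Finset.mem_Icc.mp hjI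
    have hjs : j ∈ s := by
      rw [hs]
      exact Finset.mem_range.mpr (by omega)
    have hjR : (1:ℝ) ≤ j := by exact_mod_cast hj1
    -- expand b j as product
    have hbeval : b j = ∏ l ∈ s.erase j, ((v j - v l)⁻¹ * (y - v l)) := by
      rw [hb]
      show (Lagrange.basis s v j).eval y = _
      rw [Lagrange.basis, Polynomial.eval_prod]
      exact Finset.prod_congr rfl fun l _ => by
        simp [Lagrange.basisDivisor]
    set E : Finset ℕ := (Icc 1 n).erase j with hEdef
    have hsplit : s.erase j = insert 0 E := by
      ext x
      simp only [hs, hEdef, Finset.mem_erase, Finset.mem_range, Finset.mem_insert,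
        Finset.mem_Icc]
      omega
    have h0nE : 0 ∉ E := by simp [hEdef]
    rw [hbeval, hsplit, Finset.prod_insert h0nE, abs_mul, Finset.abs_prod]
    -- factor for l = 0
    have hf0 : |(v j - v 0)⁻¹ * (y - v 0)| ≤ (64*(n:ℝ)^3/(j:ℝ)^2) * (1/(w:ℝ)^2) := by
      have hv0 : v 0 = ((ks:ℝ)+1)⁻¹ := by
        simp only [hv, hκ, if_pos rfl]
        push_cast
        ring_nf
      have hy0 : y - v 0 = ((ks:ℝ)*((ks:ℝ)+1))⁻¹ := by
        rw [hy, hv0]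
        rw [mul_inv]
        field_simp
        ring
      have hyv0 : |y - v 0| ≤ 1/(w:ℝ)^2 := by
        rw [hy0, abs_of_pos (by positivity)]
        have hle : (w:ℝ)^2 ≤ (ks:ℝ)*((ks:ℝ)+1) := by nlinarith
        calc ((ks:ℝ)*((ks:ℝ)+1))⁻¹ ≤ ((w:ℝ)^2)⁻¹ := inv_anti₀ (by positivity) hle
          _ = 1/(w:ℝ)^2 := by rw [inv_eq_one_div]
      have hvjlb : (j:ℝ)^2/(64*(n:ℝ)^3) ≤ v j - v 0 := by
        rw [hvj j hj1, hv0]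
        have hKA := KK_le_AA n j
        have hKpos := hKKpos j hj1 hjn
        have hAA : AA n j = 32*(n:ℝ)^3/(j:ℝ)^2 := rfl
        have hvlb : (j:ℝ)^2/(32*(n:ℝ)^3) ≤ ((KK n j : ℝ))⁻¹ := by
          rw [div_le_iff₀ (by positivity), inv_eq_one_div, div_mul_eq_mul_div,
            le_div_iff₀ hKpos]
          have : (KK n j : ℝ) * (j:ℝ)^2 ≤ 32*(n:ℝ)^3 := by
            have := mul_le_mul_of_nonneg_right hKA (show (0:ℝ) ≤ (j:ℝ)^2 by positivity)
            rw [hAA, div_mul_cancel₀] at this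
            · linarith
            · positivity
          linarith
        have hv0ub : ((ks:ℝ)+1)⁻¹ ≤ 1/(2000*(n:ℝ)^3) := by
          rw [inv_eq_one_div]
          apply div_le_div_of_nonneg_left one_pos.le (by positivity)
          linarith
        have hlast : (j:ℝ)^2/(64*(n:ℝ)^3) ≤ (j:ℝ)^2/(32*(n:ℝ)^3) - 1/(2000*(n:ℝ)^3) := by
          have e : (j:ℝ)^2/(32*(n:ℝ)^3) - (j:ℝ)^2/(64*(n:ℝ)^3) = (j:ℝ)^2/(64*(n:ℝ)^3) := by
            field_simp
            ring
          have g1 : 1/(2000*(n:ℝ)^3) ≤ 1/(64*(n:ℝ)^3) :=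
            div_le_div_of_nonneg_left one_pos.le (by positivity)
              (by nlinarith [pow_nonneg (show (0:ℝ) ≤ n by linarith) 3])
          have g2 : 1/(64*(n:ℝ)^3) ≤ (j:ℝ)^2/(64*(n:ℝ)^3) :=
            (div_le_div_iff_of_pos_right (by positivity)).mpr (by nlinarith)
          linarith
        linarith
      have hvjpos : (0:ℝ) < v j - v 0 := by
        have : (0:ℝ) < (j:ℝ)^2/(64*(n:ℝ)^3) := by positivity
        linarith
      rw [abs_mul, abs_inv, abs_of_pos hvjpos]
      apply mul_le_mul _ hyv0 (abs_nonneg _) (by positivity)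
      calc (v j - v 0)⁻¹ ≤ ((j:ℝ)^2/(64*(n:ℝ)^3))⁻¹ := inv_anti₀ (by positivity) hvjlb
        _ = 64*(n:ℝ)^3/(j:ℝ)^2 := by rw [inv_div]
    -- factors for l ∈ E
    have hfl : ∀ l ∈ E, |(v j - v l)⁻¹ * (y - v l)|
        ≤ (KK n j : ℝ) / |(KK n l : ℝ) - (KK n j : ℝ)| := by
      intro l hl
      have hlmem := Finset.mem_erase.mp hl
      obtain ⟨hl1, hln⟩ := Finset.mem_Icc.mp hlmem.2
      have hlj : l ≠ j := hlmem.1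
      have hKl := hKKpos l hl1 hln
      have hKj := hKKpos j hj1 hjn
      have hKlKj : (KK n l : ℝ) ≠ (KK n j : ℝ) := by
        have hls : l ∈ s := by
          rw [hs]; exact Finset.mem_range.mpr (by omega)
        have := hκinj l hls j hjs hlj
        simp only [hκ, if_neg (by omega : l ≠ 0), if_neg (by omega : j ≠ 0)] at this
        exact_mod_cast this
      have habsK : (0:ℝ) < |(KK n l : ℝ) - (KK n j : ℝ)| := by
        rw [abs_pos, sub_ne_zero]
        exact hKlKj
      -- |y - v l| ≤ v l
      have hyl : |y - v l| ≤ ((KK n l : ℝ))⁻¹ := by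
        rw [hvj l hl1]
        have hvly : y < ((KK n l : ℝ))⁻¹ := by
          rw [hy]
          apply inv_strictAnti₀ hKl
          calc (KK n l : ℝ) < w := hKKw l hl1 hln
            _ ≤ ks := hksR
        rw [abs_of_neg (by linarith : y - ((KK n l : ℝ))⁻¹ < 0)]
        have : (0:ℝ) < y := by rw [hy]; positivity
        linarith
      -- |v j - v l| = |KKl - KKj| / (KKj * KKl)
      have hvjl : |v j - v l| = |(KK n l : ℝ) - (KK n j : ℝ)| / ((KK n j : ℝ) * (KK n l : ℝ)) := by
        rw [hvj l hl1, hvj j hj1]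
        rw [inv_sub_inv (ne_of_gt hKj) (ne_of_gt hKl), abs_div]
        congr 1
        rw [abs_of_pos (mul_pos hKj hKl)]
      rw [abs_mul, abs_inv, hvjl]
      rw [inv_div]
      calc (KK n j : ℝ) * (KK n l : ℝ) / |(KK n l : ℝ) - (KK n j : ℝ)| * |y - v l|
          ≤ (KK n j : ℝ) * (KK n l : ℝ) / |(KK n l : ℝ) - (KK n j : ℝ)| * ((KK n l : ℝ))⁻¹ := by
            apply mul_le_mul_of_nonneg_left hyl
            positivity
        _ = (KK n j : ℝ) / |(KK n l : ℝ) - (KK n j : ℝ)| := by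
            field_simp
    have hprodE : ∏ l ∈ E, |(v j - v l)⁻¹ * (y - v l)| ≤ 2 := by
      calc ∏ l ∈ E, |(v j - v l)⁻¹ * (y - v l)|
          ≤ ∏ l ∈ E, ((KK n j : ℝ) / |(KK n l : ℝ) - (KK n j : ℝ)|) :=
            Finset.prod_le_prod (fun l _ => abs_nonneg _) hfl
        _ ≤ 2 := prod_K_bound hj1 hjn
    have hprodnn : (0:ℝ) ≤ ∏ l ∈ E, |(v j - v l)⁻¹ * (y - v l)| :=
      Finset.prod_nonneg (fun l _ => abs_nonneg _)
    calc |(v j - v 0)⁻¹ * (y - v 0)| * ∏ l ∈ E, |(v j - v l)⁻¹ * (y - v l)|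
        ≤ ((64*(n:ℝ)^3/(j:ℝ)^2) * (1/(w:ℝ)^2)) * 2 := by
          apply mul_le_mul hf0 hprodE hprodnn (by positivity)
      _ = 128*(n:ℝ)^3/((j:ℝ)^2*(w:ℝ)^2) := by
          field_simp
          ring
  -- sum up
  have hs0 : s = insert 0 (Icc 1 n) := by
    ext x
    simp only [hs, Finset.mem_range, Finset.mem_insert, Finset.mem_Icc]
    omega
  have h0nI : (0:ℕ) ∉ Icc 1 n := by simp
  have hdiff2 : p.eval y - p.eval (v 0) = ∑ j ∈ Icc 1 n, (p.eval (v j) - p.eval (v 0)) * b j := by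
    rw [hdiff, hs0, Finset.sum_insert h0nI]
    simp
  have habsdiff : |p.eval y - p.eval (v 0)| ≤ ∑ j ∈ Icc 1 n, 2 * (128*(n:ℝ)^3/((j:ℝ)^2*(w:ℝ)^2)) := by
    rw [hdiff2]
    calc |∑ j ∈ Icc 1 n, (p.eval (v j) - p.eval (v 0)) * b j|
        ≤ ∑ j ∈ Icc 1 n, |(p.eval (v j) - p.eval (v 0)) * b j| := Finset.abs_sum_le_sum_abs _ _
      _ ≤ ∑ j ∈ Icc 1 n, 2 * (128*(n:ℝ)^3/((j:ℝ)^2*(w:ℝ)^2)) := by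
          apply Finset.sum_le_sum
          intro j hjI
          obtain ⟨hj1, hjn⟩ := Finset.mem_Icc.mp hjI
          have hjs : j ∈ s := by rw [hs]; exact Finset.mem_range.mpr (by omega)
          have h0s : (0:ℕ) ∈ s := by rw [hs]; exact Finset.mem_range.mpr (by omega)
          have hvb1 := hvalb j hjs
          have hvb0 := hvalb 0 h0s
          have hd2 : |p.eval (v j) - p.eval (v 0)| ≤ 2 := by
            calc |p.eval (v j) - p.eval (v 0)| ≤ |p.eval (v j)| + |p.eval (v 0)| := abs_sub _ _
              _ ≤ 2 := by linarith
          rw [abs_mul]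
          apply mul_le_mul hd2 (hbj j hjI) (abs_nonneg _) (by norm_num)
  have hsumbound : ∑ j ∈ Icc 1 n, 2 * (128*(n:ℝ)^3/((j:ℝ)^2*(w:ℝ)^2)) < 1/(3*(w:ℝ)) := by
    have e : ∑ j ∈ Icc 1 n, 2 * (128*(n:ℝ)^3/((j:ℝ)^2*(w:ℝ)^2))
        = (256*(n:ℝ)^3/(w:ℝ)^2) * ∑ j ∈ Icc 1 n, ((j:ℝ)^2)⁻¹ := by
      rw [Finset.mul_sum]
      exact Finset.sum_congr rfl fun j _ => by
        field_simp
        ring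
    rw [e]
    have hssi := sum_sq_inv n hn
    have hsnn : (0:ℝ) ≤ ∑ j ∈ Icc 1 n, ((j:ℝ)^2)⁻¹ :=
      Finset.sum_nonneg fun j _ => by positivity
    have h2 : ∑ j ∈ Icc 1 n, ((j:ℝ)^2)⁻¹ ≤ 2 := by
      have : 1/(n:ℝ) > 0 := by positivity
      linarith
    calc (256*(n:ℝ)^3/(w:ℝ)^2) * ∑ j ∈ Icc 1 n, ((j:ℝ)^2)⁻¹
        ≤ (256*(n:ℝ)^3/(w:ℝ)^2) * 2 := by
          apply mul_le_mul_of_nonneg_left h2 (by positivity)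
      _ = 512*(n:ℝ)^3/(w:ℝ)^2 := by ring
      _ < 1/(3*(w:ℝ)) := by
          rw [div_lt_div_iff₀ (by positivity) (by positivity)]
          have hn3 : (1:ℝ) ≤ (n:ℝ)^3 := one_le_pow₀ hnR
          nlinarith [hbigR, hwR]
  -- contradiction with the jump
  have hv0' : v 0 = ((ks:ℝ)+1)⁻¹ := by
    simp only [hv, hκ, if_pos rfl]
    push_cast
    ring_nf
  have hjump' : 1/(3*(w:ℝ)) ≤ |p.eval y - p.eval (v 0)| := by
    rw [hv0']
    calc 1/(3*(w:ℝ)) ≤ p.eval (((ks:ℝ)+1)⁻¹) - p.eval ((ks:ℝ)⁻¹) := hjump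
      _ ≤ |p.eval (((ks:ℝ)+1)⁻¹) - p.eval ((ks:ℝ)⁻¹)| := le_abs_self _
      _ = |p.eval y - p.eval (((ks:ℝ)+1)⁻¹)| := by rw [hy, abs_sub_comm]
  linarith [lt_of_le_of_lt (le_trans hjump' habsdiff) hsumbound]



end FedjaAux


/-- fedja's lemma: a polynomial bounded at inverse-integer points with a jump
between 1/(2w) and 1/w has degree Ω(w^{1/3}). -/
theorem fedja_lower_bound : ∃ c : ℝ, 0 < c ∧ ∀ (w : ℕ), 0 < w → ∀ p : Polynomial ℝ,
    (∀ k : ℕ, 1 ≤ k → k ≤ 2 * w → |p.eval (1 / (k : ℝ))| ≤ 1) →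
    p.eval (1 / (w : ℝ)) ≤ 1 / 3 →
    2 / 3 ≤ p.eval (1 / (2 * w : ℝ)) →
    c * (w : ℝ) ^ ((1 : ℝ) / 3) ≤ (p.natDegree : ℝ) := by
  refine ⟨1/13, by norm_num, ?_⟩
  intro w hw p h1 h2 h3
  set n := p.natDegree with hn
  have hn1 : 1 ≤ n := by
    by_contra hc
    push_neg at hc
    interval_cases n
    · have h0 : p.natDegree = 0 := hn.symm
      obtain ⟨a, ha⟩ := Polynomial.natDegree_eq_zero.mp h0
      rw [← ha] at h2 h3
      simp only [Polynomial.eval_C] at h2 h3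
      linarith
  obtain ⟨ks, hks1, hks2, hjump⟩ := FedjaAux.pigeon w p hw h2 h3
  have hkey := FedjaAux.no_big w n ks p hw hn1 (le_refl n) h1 hks1 hks2 hjump
  push_neg at hkey
  have hwle : (w:ℝ) ≤ 2000*(n:ℝ)^3 := by exact_mod_cast hkey
  have hstep : (w:ℝ) ^ ((1:ℝ)/3) ≤ 13*(n:ℝ) := by
    have hnn : (0:ℝ) ≤ 13*(n:ℝ) := by positivity
    have h2000 : (w:ℝ) ≤ (13*(n:ℝ))^(3:ℕ) := by
      have : (13*(n:ℝ))^(3:ℕ) = 2197*(n:ℝ)^3 := by ring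
      rw [this]
      have : (0:ℝ) ≤ (n:ℝ)^3 := by positivity
      linarith
    calc (w:ℝ) ^ ((1:ℝ)/3) ≤ ((13*(n:ℝ))^(3:ℕ)) ^ ((1:ℝ)/3) :=
          Real.rpow_le_rpow (by positivity) h2000 (by norm_num)
      _ = 13*(n:ℝ) := by
          rw [← Real.rpow_natCast (13*(n:ℝ)) 3, ← Real.rpow_mul hnn]
          norm_num
  calc (1/13) * (w:ℝ) ^ ((1:ℝ)/3) ≤ (1/13) * (13*(n:ℝ)) := by
        apply mul_le_mul_of_nonneg_left hstep (by norm_num)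
    _ = (n:ℝ) := by ring
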